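/- Let G : Z → Z be (1/L)-co-coercive and let {z^k} be generated by the inexact Halpern iteration with β_k = 1/(k+2), η_k = (1-β_k)/L, and inexactness ‖G(z^k) - \tilde{z}^k‖ ≤ γ_k. If z* satisfies G(z*) = 0, then for all k ≥ 0, ‖z^{k+1} - z^k‖² ≤ 8(7L‖z^0 - z*‖ + 11√(Σ_{i=0}^{k}(i+1)²γ_i²))² / (L²(k+1)(k+2)). -/
import Mathlib


open scoped RealInnerProductSpace

private lemma sum_inv_sq_le' (γ : ℕ → ℝ) (n : ℕ) :
    ∑ i ∈ Finset.range n, (1:ℝ)/((i:ℝ)+1)^2 ≤ 2 := by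
  have h : ∀ m : ℕ, ∑ i ∈ Finset.range m, (1:ℝ)/((i:ℝ)+1)^2 ≤ 2 - 2/((m:ℝ)+1) := by
    intro m
    induction m with
    | zero => norm_num
    | succ n ih =>
      rw [Finset.sum_range_succ]
      have h1 : (0:ℝ) < (n:ℝ)+1 := by positivity
      have h2 : (0:ℝ) < (n:ℝ)+2 := by positivity
      have key : (1:ℝ)/((n:ℝ)+1)^2 + 2/((n:ℝ)+1+1) ≤ 2/((n:ℝ)+1) := by
        rw [div_add_div _ _ (by positivity) (by positivity),
          div_le_div_iff₀ (by positivity) (by positivity)]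
        nlinarith [h1, h2]
      push_cast
      push_cast at ih key
      linarith
  have h2 : (0:ℝ) < (n:ℝ)+1 := by positivity
  have h3 : (0:ℝ) ≤ 2/((n:ℝ)+1) := by positivity
  linarith [h n]

private lemma amgm_div' (c g y B : ℝ) (hc : 0 < c) (hg : 0 ≤ g) (hy : 0 ≤ y) (hyB : y ≤ B) :
    2*g*y ≤ 12*c^2*g^2 + (B^2/12)*(1/c^2) := by
  have hnum : 0 ≤ 144*c^4*g^2 + B^2 - 24*c^2*g*y := by
    nlinarith [sq_nonneg (12*c^2*g - y), mul_nonneg (sub_nonneg.2 hyB) (by linarith : (0:ℝ) ≤ B + y)]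
  have heq : 12*c^2*g^2 + (B^2/12)*(1/c^2) - 2*g*y
      = (144*c^4*g^2 + B^2 - 24*c^2*g*y)/(12*c^2) := by
    field_simp
    ring
  have hd : 0 ≤ (144*c^4*g^2 + B^2 - 24*c^2*g*y)/(12*c^2) :=
    div_nonneg hnum (by positivity)
  linarith [heq ▸ hd]

private lemma amgm_last' (c g y : ℝ) (hc : 1 ≤ c) (hg : 0 ≤ g) (hy : 0 ≤ y) :
    2*g*y ≤ 12*c^2*g^2 + y^2/12 := by
  nlinarith [sq_nonneg (12*c*g - y), mul_nonneg (mul_nonneg (sub_nonneg.2 hc) hg) hy]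

set_option maxHeartbeats 2000000 in
theorem stmt_8 {Z : Type*} [NormedAddCommGroup Z] [InnerProductSpace ℝ Z]
    [FiniteDimensional ℝ Z]
    (L : ℝ) (hL : 0 < L) (G : Z → Z)
    (hG : ∀ z₁ z₂ : Z, ⟪G z₁ - G z₂, z₁ - z₂⟫ ≥ (1 / L) * ‖G z₁ - G z₂‖ ^ 2)
    (z ztil : ℕ → Z) (γ : ℕ → ℝ) (hγ : ∀ k, 0 ≤ γ k)
    (hrec : ∀ k : ℕ, z (k + 1) = (1 / ((k : ℝ) + 2)) • z 0 + (((k : ℝ) + 1) / ((k : ℝ) + 2)) • z k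
      - (((k : ℝ) + 1) / (L * ((k : ℝ) + 2))) • ztil k)
    (hin : ∀ k : ℕ, ‖G (z k) - ztil k‖ ≤ γ k)
    (zs : Z) (hzs : G zs = 0) :
    ∀ k : ℕ, ‖z (k + 1) - z k‖ ^ 2 ≤
      8 * (7 * L * ‖z 0 - zs‖ +
          11 * Real.sqrt (∑ i ∈ Finset.range (k + 1), ((i : ℝ) + 1) ^ 2 * γ i ^ 2)) ^ 2 /
        (L ^ 2 * (((k : ℝ) + 1) * ((k : ℝ) + 2))) := by
  set D : ℝ := ‖z 0 - zs‖ with hDdef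
  have hD : 0 ≤ D := norm_nonneg _
  have hS0 : ∀ n : ℕ, (0:ℝ) ≤ ∑ i ∈ Finset.range n, ((i:ℝ)+1)^2*γ i^2 := by
    intro n; apply Finset.sum_nonneg; intro i _; positivity
  have hSmono : ∀ {m n : ℕ}, m ≤ n →
      (∑ i ∈ Finset.range m, ((i:ℝ)+1)^2*γ i^2) ≤ ∑ i ∈ Finset.range n, ((i:ℝ)+1)^2*γ i^2 := by
    intro m n hmn
    exact Finset.sum_le_sum_of_subset_of_nonneg (Finset.range_subset_range.2 hmn)
      (fun i _ _ => by positivity)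
  have hγS : ∀ j : ℕ, ((j:ℝ)+1) * γ j
      ≤ Real.sqrt (∑ i ∈ Finset.range (j+1), ((i:ℝ)+1)^2*γ i^2) := by
    intro j
    have h1 : (((j:ℝ)+1) * γ j)^2 ≤ ∑ i ∈ Finset.range (j+1), ((i:ℝ)+1)^2*γ i^2 := by
      have := Finset.single_le_sum (f := fun i : ℕ => ((i : ℝ) + 1) ^ 2 * γ i ^ 2)
        (fun i _ => by positivity) (Finset.self_mem_range_succ j)
      calc (((j:ℝ)+1) * γ j)^2 = ((j:ℝ)+1)^2 * γ j^2 := by ring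
        _ ≤ _ := this
    calc ((j:ℝ)+1) * γ j = Real.sqrt ((((j:ℝ)+1) * γ j)^2) :=
          (Real.sqrt_sq (mul_nonneg (by positivity) (hγ j))).symm
      _ ≤ _ := Real.sqrt_le_sqrt h1
  -- vector identities
  have hv1 : ∀ k : ℕ, (2*L*((k:ℝ)+1)*((k:ℝ)+2)) • (z (k+1) - z k) =
      (-(2*L*((k:ℝ)+1))) • (z k - z 0) - (2*((k:ℝ)+1)^2) • ztil k := by
    intro k
    have hk2 : ((k:ℝ)+2) ≠ 0 := by positivity
    rw [hrec k]
    match_scalars <;> field_simp <;> ring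
  have hv2 : ∀ k : ℕ, (L*((k:ℝ)+2)) • (z (k+1) - z 0) =
      (L*((k:ℝ)+1)) • (z k - z 0) - ((k:ℝ)+1) • ztil k := by
    intro k
    have hk2 : ((k:ℝ)+2) ≠ 0 := by positivity
    rw [hrec k]
    match_scalars <;> field_simp <;> ring
  -- one-step potential decrease
  have hA : ∀ k : ℕ,
      ((k:ℝ)+1)*((k:ℝ)+2)*‖G (z (k+1))‖^2 + 2*L*((k:ℝ)+2)*⟪G (z (k+1)), z (k+1) - z 0⟫
      ≤ (k:ℝ)*((k:ℝ)+1)*‖G (z k)‖^2 + 2*L*((k:ℝ)+1)*⟪G (z k), z k - z 0⟫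
        + ((k:ℝ)+1)^2 * γ k^2 + 2*((k:ℝ)+1)*γ k*‖G (z (k+1))‖ := by
    intro k
    have hk0 : (0:ℝ) ≤ (k:ℝ) := Nat.cast_nonneg k
    set e : Z := ztil k - G (z k) with he
    have hen : ‖e‖ ≤ γ k := by rw [he, norm_sub_rev]; exact hin k
    have hze : ztil k = G (z k) + e := by rw [he]; abel
    have hΔ : ‖G (z (k+1)) - G (z k)‖^2
        = ‖G (z (k+1))‖^2 - 2*⟪G (z (k+1)), G (z k)⟫ + ‖G (z k)‖^2 := norm_sub_sq_real _ _
    have h1 : ‖G (z (k+1)) - G (z k)‖^2 ≤ ⟪G (z (k+1)) - G (z k), z (k+1) - z k⟫ * L := by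
      have h := hG (z (k+1)) (z k)
      rw [ge_iff_le, one_div, inv_mul_eq_div, div_le_iff₀ hL] at h
      exact h
    have h2 := mul_le_mul_of_nonneg_left h1
      (by positivity : (0:ℝ) ≤ 2*((k:ℝ)+1)*((k:ℝ)+2))
    have h3 : 2*((k:ℝ)+1)*((k:ℝ)+2)*(⟪G (z (k+1)) - G (z k), z (k+1) - z k⟫ * L)
        = ⟪G (z (k+1)) - G (z k), (2*L*((k:ℝ)+1)*((k:ℝ)+2)) • (z (k+1) - z k)⟫ := by
      rw [real_inner_smul_right]; ring
    rw [h3, hv1 k, hze] at h2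
    simp only [inner_sub_right, inner_add_right, real_inner_smul_right, inner_sub_left,
      real_inner_self_eq_norm_sq, inner_neg_right, smul_neg, neg_smul] at h2 ⊢
    have hC1 : L*((k:ℝ)+2)*⟪G (z (k+1)), z (k+1) - z 0⟫
        = L*((k:ℝ)+1)*⟪G (z (k+1)), z k - z 0⟫
          - ((k:ℝ)+1)*(⟪G (z (k+1)), G (z k)⟫ + ⟪G (z (k+1)), e⟫) := by
      rw [← real_inner_smul_right, hv2 k, hze]
      simp only [inner_sub_right, inner_add_right, real_inner_smul_right]
    simp only [inner_sub_right, inner_add_right, real_inner_smul_right] at hC1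
    have hq10 : -(⟪G (z (k+1)), e⟫ - ⟪G (z k), e⟫) ≤ ‖G (z (k+1)) - G (z k)‖ * γ k := by
      have h := abs_real_inner_le_norm (G (z (k+1)) - G (z k)) e
      rw [inner_sub_left] at h
      have h2' : ‖G (z (k+1)) - G (z k)‖ * ‖e‖ ≤ ‖G (z (k+1)) - G (z k)‖ * γ k :=
        mul_le_mul_of_nonneg_left hen (norm_nonneg _)
      have h3' := neg_abs_le (⟪G (z (k+1)), e⟫ - ⟪G (z k), e⟫)
      linarith
    have hq1 : -⟪G (z (k+1)), e⟫ ≤ ‖G (z (k+1))‖ * γ k := by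
      have h := abs_real_inner_le_norm (G (z (k+1))) e
      have h2' : ‖G (z (k+1))‖ * ‖e‖ ≤ ‖G (z (k+1))‖ * γ k :=
        mul_le_mul_of_nonneg_left hen (norm_nonneg _)
      have h3' := neg_abs_le (⟪G (z (k+1)), e⟫)
      linarith
    have hq10' := mul_le_mul_of_nonneg_left hq10
      (by positivity : (0:ℝ) ≤ 2*((k:ℝ)+1)^2)
    have hq1' := mul_le_mul_of_nonneg_left hq1
      (by positivity : (0:ℝ) ≤ 2*((k:ℝ)+1))
    have hamgm : 2*((k:ℝ)+1)^2*(‖G (z (k+1)) - G (z k)‖ * γ k)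
        ≤ ((k:ℝ)+1)^2*‖G (z (k+1)) - G (z k)‖^2 + ((k:ℝ)+1)^2*γ k^2 := by
      nlinarith [mul_nonneg (sq_nonneg ((k:ℝ)+1)) (sq_nonneg (‖G (z (k+1)) - G (z k)‖ - γ k))]
    have hmono : ((k:ℝ)+1)^2*‖G (z (k+1)) - G (z k)‖^2
        ≤ ((k:ℝ)+1)*((k:ℝ)+2)*‖G (z (k+1)) - G (z k)‖^2 := by
      nlinarith [sq_nonneg (‖G (z (k+1)) - G (z k)‖), hk0]
    rw [hΔ] at h2 hmono hamgm
    linarith [h2, hC1, hq10', hq1', hamgm, hmono]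
  -- lower bound on the potential via co-coercivity at the solution
  have hCB : ∀ j : ℕ, ((j:ℝ)+1)*((j:ℝ)+2)*‖G (z j)‖^2 - 2*L*((j:ℝ)+1)*D*‖G (z j)‖
      ≤ (j:ℝ)*((j:ℝ)+1)*‖G (z j)‖^2 + 2*L*((j:ℝ)+1)*⟪G (z j), z j - z 0⟫ := by
    intro j
    have hj0 : (0:ℝ) ≤ (j:ℝ) := Nat.cast_nonneg j
    have h1 : ‖G (z j)‖^2 ≤ ⟪G (z j), z j - zs⟫ * L := by
      have h := hG (z j) zs
      rw [hzs, sub_zero, ge_iff_le, one_div, inv_mul_eq_div, div_le_iff₀ hL] at h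
      exact h
    have hsplit : ⟪G (z j), z j - z 0⟫ = ⟪G (z j), z j - zs⟫ + ⟪G (z j), zs - z 0⟫ := by
      rw [← inner_add_right]
      congr 1
      abel
    have hcs : -⟪G (z j), zs - z 0⟫ ≤ ‖G (z j)‖ * D := by
      have h := abs_real_inner_le_norm (G (z j)) (zs - z 0)
      rw [norm_sub_rev] at h
      have h2 := neg_abs_le (⟪G (z j), zs - z 0⟫)
      rw [hDdef]
      linarith
    have h1' := mul_le_mul_of_nonneg_left h1 (by positivity : (0:ℝ) ≤ 2*((j:ℝ)+1))
    have hcs' := mul_le_mul_of_nonneg_left hcs (by positivity : (0:ℝ) ≤ 2*L*((j:ℝ)+1))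
    rw [hsplit]
    nlinarith [h1', hcs']
  -- unrolled potential bound
  have hCsum : ∀ j : ℕ, (j:ℝ)*((j:ℝ)+1)*‖G (z j)‖^2 + 2*L*((j:ℝ)+1)*⟪G (z j), z j - z 0⟫
      ≤ ∑ i ∈ Finset.range j, (((i:ℝ)+1)^2*γ i^2 + 2*γ i*(((i:ℝ)+2)*‖G (z (i+1))‖)) := by
    intro j
    induction j with
    | zero => simp
    | succ n ih =>
      rw [Finset.sum_range_succ]
      have hAn := hA n
      have hstep : 2*((n:ℝ)+1)*γ n*‖G (z (n+1))‖ ≤ 2*γ n*(((n:ℝ)+2)*‖G (z (n+1))‖) := by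
        nlinarith [mul_nonneg (hγ n) (norm_nonneg (G (z (n+1))))]
      push_cast
      linarith [ih, hAn, hstep]
  -- master inequality
  have hmaster : ∀ j : ℕ, (((j:ℝ)+1)*‖G (z j)‖)^2 ≤ 2*L*D*(((j:ℝ)+1)*‖G (z j)‖)
      + (∑ i ∈ Finset.range j, ((i:ℝ)+1)^2*γ i^2)
      + ∑ i ∈ Finset.range j, 2*γ i*(((i:ℝ)+2)*‖G (z (i+1))‖) := by
    intro j
    have h1 := hCB j
    have h2 := hCsum j
    have hj0 : (0:ℝ) ≤ (j:ℝ) := Nat.cast_nonneg j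
    have h3 : (((j:ℝ)+1)*‖G (z j)‖)^2 ≤ ((j:ℝ)+1)*((j:ℝ)+2)*‖G (z j)‖^2 := by
      nlinarith [sq_nonneg ‖G (z j)‖]
    have h4 : ∑ i ∈ Finset.range j, (((i:ℝ)+1)^2*γ i^2 + 2*γ i*(((i:ℝ)+2)*‖G (z (i+1))‖))
        = (∑ i ∈ Finset.range j, ((i:ℝ)+1)^2*γ i^2)
          + ∑ i ∈ Finset.range j, 2*γ i*(((i:ℝ)+2)*‖G (z (i+1))‖) :=
      Finset.sum_add_distrib
    rw [h4] at h2
    nlinarith [h1, h2, h3]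
  -- residual bound by strong induction
  have hr : ∀ j : ℕ, ((j:ℝ)+1)*‖G (z j)‖
      ≤ 6*(L*D + Real.sqrt (∑ i ∈ Finset.range j, ((i:ℝ)+1)^2*γ i^2)) := by
    intro j
    induction j using Nat.strong_induction_on with
    | _ j ih =>
      match j with
      | 0 =>
        have h := hmaster 0
        simp at h ⊢
        have hn := norm_nonneg (G (z 0))
        have ha : (0:ℝ) ≤ L*D := by positivity
        nlinarith [h, hn, ha, mul_nonneg ha hn]
      | (m+1) =>
        set s : ℝ := Real.sqrt (∑ i ∈ Finset.range (m+1), ((i:ℝ)+1)^2*γ i^2) with hs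
        have hsnn : 0 ≤ s := Real.sqrt_nonneg _
        have hssq : s^2 = ∑ i ∈ Finset.range (m+1), ((i:ℝ)+1)^2*γ i^2 :=
          Real.sq_sqrt (hS0 (m+1))
        set B : ℝ := 6*(L*D + s) with hB
        have hBnn : 0 ≤ B := by rw [hB]; positivity
        have hterm : ∀ i ∈ Finset.range m, 2*γ i*(((i:ℝ)+2)*‖G (z (i+1))‖)
            ≤ 12*((i:ℝ)+1)^2*γ i^2 + (B^2/12)*(1/((i:ℝ)+1)^2) := by
          intro i hi
          have him : i + 1 < m + 1 := by simpa using Finset.mem_range.1 hi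
          have hIH := ih (i+1) him
          have hmon : Real.sqrt (∑ l ∈ Finset.range (i+1), ((l:ℝ)+1)^2*γ l^2) ≤ s := by
            rw [hs]
            exact Real.sqrt_le_sqrt (hSmono (by omega))
          have hyB : ((i:ℝ)+2)*‖G (z (i+1))‖ ≤ B := by
            rw [hB]
            push_cast at hIH
            have h2 : ((i:ℝ)+2)*‖G (z (i+1))‖ = ((i:ℝ)+1+1)*‖G (z (i+1))‖ := by ring
            rw [h2]
            linarith [hIH, hmon]
          exact amgm_div' ((i:ℝ)+1) (γ i) (((i:ℝ)+2)*‖G (z (i+1))‖) B (by positivity) (hγ i)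
            (by positivity) hyB
        have hsum1 : ∑ i ∈ Finset.range m, 2*γ i*(((i:ℝ)+2)*‖G (z (i+1))‖)
            ≤ ∑ i ∈ Finset.range m, (12*((i:ℝ)+1)^2*γ i^2 + (B^2/12)*(1/((i:ℝ)+1)^2)) :=
          Finset.sum_le_sum hterm
        have hsum2 : ∑ i ∈ Finset.range m, (12*((i:ℝ)+1)^2*γ i^2 + (B^2/12)*(1/((i:ℝ)+1)^2))
            = 12*(∑ i ∈ Finset.range m, ((i:ℝ)+1)^2*γ i^2)
              + (B^2/12)*(∑ i ∈ Finset.range m, 1/((i:ℝ)+1)^2) := by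
          rw [Finset.sum_add_distrib, Finset.mul_sum, Finset.mul_sum]
          congr 1
          exact Finset.sum_congr rfl (fun i _ => by ring)
        have hsum3 : (B^2/12)*(∑ i ∈ Finset.range m, 1/((i:ℝ)+1)^2) ≤ (B^2/12)*2 :=
          mul_le_mul_of_nonneg_left (sum_inv_sq_le' γ m) (by positivity)
        have hm := hmaster (m+1)
        push_cast at hm ⊢
        rw [Finset.sum_range_succ (fun i => 2*γ i*(((i:ℝ)+2)*‖G (z (i+1))‖)) m] at hm
        have hlast : 2*γ m*(((m:ℝ)+2)*‖G (z (m+1))‖)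
            ≤ 12*((m:ℝ)+1)^2*γ m^2 + (((m:ℝ)+2)*‖G (z (m+1))‖)^2/12 :=
          amgm_last' ((m:ℝ)+1) (γ m) (((m:ℝ)+2)*‖G (z (m+1))‖)
            (by have : (0:ℝ) ≤ (m:ℝ) := Nat.cast_nonneg m; linarith) (hγ m) (by positivity)
        have hSsplit : (∑ i ∈ Finset.range (m+1), ((i:ℝ)+1)^2*γ i^2)
            = (∑ i ∈ Finset.range m, ((i:ℝ)+1)^2*γ i^2) + ((m:ℝ)+1)^2*γ m^2 :=
          Finset.sum_range_succ _ m
        set r : ℝ := ((m:ℝ)+1+1)*‖G (z (m+1))‖ with hrdef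
        have hr0 : 0 ≤ r := by rw [hrdef]; positivity
        have hry : ((m:ℝ)+2)*‖G (z (m+1))‖ = r := by rw [hrdef]; ring
        rw [hry] at hm hlast
        have hchain : r^2 ≤ 2*(L*D)*r + 13*s^2 + B^2/6 + r^2/12 := by
          linarith [hm, hsum1, hsum2, hsum3, hlast, hSsplit, hssq]
        by_contra hcon
        push_neg at hcon
        have hBr : B < r := by rw [hB]; exact hcon
        have ha : (0:ℝ) ≤ L*D := by positivity
        have h1 : 0 < r*(r - B) := mul_pos (lt_of_le_of_lt hBnn hBr) (sub_pos.2 hBr)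
        have h2 : 0 ≤ (L*D)*(r - B) := mul_nonneg ha (sub_pos.2 hBr).le
        have h3 : 0 ≤ s*(r - B) := mul_nonneg hsnn (sub_pos.2 hBr).le
        rw [hB] at h1 h2 h3
        nlinarith [hchain, h1, h2, h3, sq_nonneg s, mul_nonneg ha hsnn]
  -- norm bound on the inexact operator values
  have htil : ∀ k : ℕ, ‖ztil k‖ ≤ ‖G (z k)‖ + γ k := by
    intro k
    have h1 : ztil k = G (z k) - (G (z k) - ztil k) := by abel
    calc ‖ztil k‖ = ‖G (z k) - (G (z k) - ztil k)‖ := by rw [← h1]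
      _ ≤ ‖G (z k)‖ + ‖G (z k) - ztil k‖ := norm_sub_le _ _
      _ ≤ ‖G (z k)‖ + γ k := by linarith [hin k]
  -- boundedness of the iterates
  have hw : ∀ j : ℕ, L*((j:ℝ)+1)*‖z j - z 0‖
      ≤ (j:ℝ)*(6*(L*D) + 7*Real.sqrt (∑ i ∈ Finset.range j, ((i:ℝ)+1)^2*γ i^2)) := by
    intro j
    induction j with
    | zero => simp
    | succ n ih =>
      have e1 : ‖(L*((n:ℝ)+2)) • (z (n+1) - z 0)‖ = L*((n:ℝ)+2)*‖z (n+1) - z 0‖ := by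
        rw [norm_smul, Real.norm_eq_abs, abs_of_pos (by positivity)]
      have h5 : L*((n:ℝ)+2)*‖z (n+1) - z 0‖
          ≤ L*((n:ℝ)+1)*‖z n - z 0‖ + ((n:ℝ)+1)*‖ztil n‖ := by
        calc L*((n:ℝ)+2)*‖z (n+1) - z 0‖ = ‖(L*((n:ℝ)+2)) • (z (n+1) - z 0)‖ := e1.symm
          _ = ‖(L*((n:ℝ)+1)) • (z n - z 0) - ((n:ℝ)+1) • ztil n‖ := by rw [hv2 n]
          _ ≤ ‖(L*((n:ℝ)+1)) • (z n - z 0)‖ + ‖((n:ℝ)+1) • ztil n‖ := norm_sub_le _ _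
          _ = L*((n:ℝ)+1)*‖z n - z 0‖ + ((n:ℝ)+1)*‖ztil n‖ := by
              rw [norm_smul, norm_smul, Real.norm_eq_abs, Real.norm_eq_abs,
                abs_of_pos (by positivity), abs_of_pos (by positivity)]
      have hmon : Real.sqrt (∑ i ∈ Finset.range n, ((i:ℝ)+1)^2*γ i^2)
          ≤ Real.sqrt (∑ i ∈ Finset.range (n+1), ((i:ℝ)+1)^2*γ i^2) :=
        Real.sqrt_le_sqrt (hSmono (by omega))
      have hmon' := mul_le_mul_of_nonneg_left hmon (Nat.cast_nonneg (α := ℝ) n)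
      have htil' := mul_le_mul_of_nonneg_left (htil n)
        (by positivity : (0:ℝ) ≤ (n:ℝ)+1)
      push_cast
      linarith [ih, h5, hr n, hγS n, htil', hmon']
  -- final assembly
  intro k
  set s : ℝ := Real.sqrt (∑ i ∈ Finset.range (k+1), ((i:ℝ)+1)^2*γ i^2) with hs
  have hsnn : 0 ≤ s := Real.sqrt_nonneg _
  have hmon : Real.sqrt (∑ i ∈ Finset.range k, ((i:ℝ)+1)^2*γ i^2) ≤ s := by
    rw [hs]; exact Real.sqrt_le_sqrt (hSmono (by omega))
  have hX : L*((k:ℝ)+2)*‖z (k+1) - z k‖ ≤ 12*(L*D) + 14*s := by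
    have e1 : ‖(2*L*((k:ℝ)+1)*((k:ℝ)+2)) • (z (k+1) - z k)‖
        = 2*L*((k:ℝ)+1)*((k:ℝ)+2)*‖z (k+1) - z k‖ := by
      rw [norm_smul, Real.norm_eq_abs, abs_of_pos (by positivity)]
    have h5 : 2*L*((k:ℝ)+1)*((k:ℝ)+2)*‖z (k+1) - z k‖
        ≤ 2*L*((k:ℝ)+1)*‖z k - z 0‖ + 2*((k:ℝ)+1)^2*‖ztil k‖ := by
      calc 2*L*((k:ℝ)+1)*((k:ℝ)+2)*‖z (k+1) - z k‖
          = ‖(2*L*((k:ℝ)+1)*((k:ℝ)+2)) • (z (k+1) - z k)‖ := e1.symm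
        _ = ‖(-(2*L*((k:ℝ)+1))) • (z k - z 0) - (2*((k:ℝ)+1)^2) • ztil k‖ := by rw [hv1 k]
        _ ≤ ‖(-(2*L*((k:ℝ)+1))) • (z k - z 0)‖ + ‖(2*((k:ℝ)+1)^2) • ztil k‖ := norm_sub_le _ _
        _ = 2*L*((k:ℝ)+1)*‖z k - z 0‖ + 2*((k:ℝ)+1)^2*‖ztil k‖ := by
            rw [norm_smul, norm_smul, Real.norm_eq_abs, Real.norm_eq_abs,
              abs_neg, abs_of_pos (by positivity : (0:ℝ) < 2*L*((k:ℝ)+1)),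
              abs_of_pos (by positivity)]
    have ha1 := mul_le_mul_of_nonneg_left (hw k) (by norm_num : (0:ℝ) ≤ 2)
    have ha2 := mul_le_mul_of_nonneg_left (hr k) (by positivity : (0:ℝ) ≤ 2*((k:ℝ)+1))
    have ha3 := mul_le_mul_of_nonneg_left (hγS k) (by positivity : (0:ℝ) ≤ 2*((k:ℝ)+1))
    have ha4 := mul_le_mul_of_nonneg_left hmon
      (by positivity : (0:ℝ) ≤ 14*(k:ℝ) + 12*((k:ℝ)+1))
    have ha5 := mul_le_mul_of_nonneg_left (htil k) (by positivity : (0:ℝ) ≤ 2*((k:ℝ)+1)^2)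
    have hkpos : (0:ℝ) < 2*((k:ℝ)+1) := by positivity
    have h6 : 2*((k:ℝ)+1)*(L*((k:ℝ)+2)*‖z (k+1) - z k‖)
        ≤ 2*((k:ℝ)+1)*(12*(L*D) + 14*s) := by
      rw [hs] at *
      nlinarith [h5, ha1, ha2, ha3, ha4, ha5]
    exact le_of_mul_le_mul_left h6 hkpos
  have h7 : (L*((k:ℝ)+2)*‖z (k+1) - z k‖)^2 ≤ (12*(L*D) + 14*s)^2 :=
    pow_le_pow_left₀ (by positivity) hX 2
  have h8 : ‖z (k+1) - z k‖^2*(L^2*(((k:ℝ)+1)*((k:ℝ)+2)))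
      ≤ (L*((k:ℝ)+2)*‖z (k+1) - z k‖)^2 := by
    nlinarith [mul_nonneg (mul_nonneg (sq_nonneg ‖z (k+1) - z k‖) (sq_nonneg L))
      (by positivity : (0:ℝ) ≤ (k:ℝ)+2)]
  have h9 : (12*(L*D) + 14*s)^2 ≤ 8*(7*L*D + 11*s)^2 := by
    nlinarith [mul_nonneg (mul_nonneg hL.le hD) hsnn, sq_nonneg (L*D), sq_nonneg s]
  rw [le_div_iff₀ (by positivity)]
  linarith [h7, h8, h9]
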